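/- Let φ, ψ : ℝ → ℂ be continuous even functions such that |φ| and |ψ| are strictly increasing on (0,∞) and |φ(t)|/|ψ(t)| is non-increasing on (0,∞). Fix b > 0 and let φ_b be as defined. Then for every finite Borel measure μ on ℝ, ∫ℝ |φ(t) − φ_b(t)|² dμ(t) ≤ (|φ(b)|/|ψ(b)|)² · ∫ℝ |ψ(t)|² dμ(t). -/

import Mathlib

open MeasureTheory
open scoped ENNReal NNReal

/-- The truncation `φ_b(t) = φ(t) − (φ(b)/ψ(b))·ψ(t)` for `|t| ≤ b`, `0` otherwise. -/
noncomputable def phib (φ ψ : ℝ → ℂ) (b : ℝ) : ℝ → ℂ :=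
  fun t => if |t| ≤ b then φ t - (φ b / ψ b) * ψ t else 0

/-- For every finite Borel measure `μ` on `ℝ`,
`∫ |φ − φ_b|² dμ ≤ (|φ(b)|/|ψ(b)|)² · ∫ |ψ|² dμ`
(integrals taken in `[0,∞]`). -/
theorem integral_phib_deviation_sq_le
    (φ ψ : ℝ → ℂ) (hφc : Continuous φ) (hψc : Continuous ψ)
    (hφe : ∀ t : ℝ, φ (-t) = φ t) (hψe : ∀ t : ℝ, ψ (-t) = ψ t)
    (hφm : StrictMonoOn (fun t => ‖φ t‖) (Set.Ioi (0 : ℝ)))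
    (hψm : StrictMonoOn (fun t => ‖ψ t‖) (Set.Ioi (0 : ℝ)))
    (hratio : AntitoneOn (fun t => ‖φ t‖ / ‖ψ t‖) (Set.Ioi (0 : ℝ)))
    (b : ℝ) (hb : 0 < b)
    (μ : Measure ℝ) [IsFiniteMeasure μ] :
    ∫⁻ t, (‖φ t - phib φ ψ b t‖₊ : ℝ≥0∞) ^ 2 ∂μ
      ≤ ENNReal.ofReal ((‖φ b‖ / ‖ψ b‖) ^ 2) * ∫⁻ t, (‖ψ t‖₊ : ℝ≥0∞) ^ 2 ∂μ := by
  set c : ℝ := ‖φ b‖ / ‖ψ b‖ with hc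
  have hψb : 0 < ‖ψ b‖ := by
    have h := hψm (Set.mem_Ioi.mpr (half_pos hb)) (Set.mem_Ioi.mpr hb) (by linarith)
    exact lt_of_le_of_lt (norm_nonneg _) h
  have hψbne : ψ b ≠ 0 := by
    intro h; rw [h, norm_zero] at hψb; exact lt_irrefl _ hψb
  have hφabs : ∀ t : ℝ, φ |t| = φ t := by
    intro t
    rcases abs_choice t with h | h
    · rw [h]
    · rw [h, hφe]
  have hψabs : ∀ t : ℝ, ψ |t| = ψ t := by
    intro t
    rcases abs_choice t with h | h
    · rw [h]
    · rw [h, hψe]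
  have key : ∀ t : ℝ, ‖φ t - phib φ ψ b t‖ ≤ c * ‖ψ t‖ := by
    intro t
    unfold phib
    by_cases ht : |t| ≤ b
    · simp only [ht, if_true]
      have : φ t - (φ t - φ b / ψ b * ψ t) = φ b / ψ b * ψ t := by ring
      rw [this, norm_mul, norm_div]
    · simp only [ht, if_false, sub_zero]
      have htb : b < |t| := lt_of_not_ge ht
      have ht0 : (0 : ℝ) < |t| := lt_trans hb htb
      have hψt : 0 < ‖ψ t‖ := by
        rw [← hψabs t]
        have h := hψm (Set.mem_Ioi.mpr hb) (Set.mem_Ioi.mpr ht0) htb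
        exact lt_of_lt_of_le hψb (le_of_lt h)
      have hr := hratio (Set.mem_Ioi.mpr hb) (Set.mem_Ioi.mpr ht0) (le_of_lt htb)
      simp only [hφabs, hψabs] at hr
      calc ‖φ t‖ = (‖φ t‖ / ‖ψ t‖) * ‖ψ t‖ := (div_mul_cancel₀ _ (ne_of_gt hψt)).symm
        _ ≤ c * ‖ψ t‖ := by
            apply mul_le_mul_of_nonneg_right hr (norm_nonneg _)
  have hc0 : 0 ≤ c := div_nonneg (norm_nonneg _) (norm_nonneg _)
  have key2 : ∀ t : ℝ, (‖φ t - phib φ ψ b t‖₊ : ℝ≥0∞) ^ 2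
      ≤ ENNReal.ofReal (c ^ 2) * (‖ψ t‖₊ : ℝ≥0∞) ^ 2 := by
    intro t
    have h1 : ‖φ t - phib φ ψ b t‖ ^ 2 ≤ c ^ 2 * ‖ψ t‖ ^ 2 := by
      have := key t
      nlinarith [norm_nonneg (φ t - phib φ ψ b t), norm_nonneg (ψ t)]
    calc (‖φ t - phib φ ψ b t‖₊ : ℝ≥0∞) ^ 2
        = ENNReal.ofReal (‖φ t - phib φ ψ b t‖ ^ 2) := by
          rw [← enorm_eq_nnnorm, ← ofReal_norm, ← ENNReal.ofReal_pow (norm_nonneg _)]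
      _ ≤ ENNReal.ofReal (c ^ 2 * ‖ψ t‖ ^ 2) := ENNReal.ofReal_le_ofReal h1
      _ = ENNReal.ofReal (c ^ 2) * (‖ψ t‖₊ : ℝ≥0∞) ^ 2 := by
          rw [ENNReal.ofReal_mul (by positivity), ← enorm_eq_nnnorm, ← ofReal_norm,
            ← ENNReal.ofReal_pow (norm_nonneg _)]
  calc ∫⁻ t, (‖φ t - phib φ ψ b t‖₊ : ℝ≥0∞) ^ 2 ∂μ
      ≤ ∫⁻ t, ENNReal.ofReal (c ^ 2) * (‖ψ t‖₊ : ℝ≥0∞) ^ 2 ∂μ :=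
        lintegral_mono key2
    _ = ENNReal.ofReal (c ^ 2) * ∫⁻ t, (‖ψ t‖₊ : ℝ≥0∞) ^ 2 ∂μ :=
        lintegral_const_mul' _ _ ENNReal.ofReal_ne_top
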